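/- Let p be a prime number, let J be a positive integer, let c be a non-negative integer, and let G be a finite group containing a normal subgroup à of index at most J such that à is nilpotent of class at most c. Then G contains a normal subgroup A that is nilpotent of class at most c, whose order is coprime to p, and whose index in G is at most J·|G_p|, where G_p is a p-Sylow subgroup of G. -/

import Mathlib

open Subgroup hiding upperCentralSeries

theorem aux_sup_coprime {p : ℕ} (hp : p.Prime) {N : Type*} [Group N] [Finite N]
    (K : ℕ → Subgroup N) (t : Finset ℕ)
    (h : ∀ q ∈ t, (K q).Normal ∧ ¬ p ∣ Nat.card ↥(K q)) :
    (t.sup K).Normal ∧ ¬ p ∣ Nat.card ↥(t.sup K) := by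
  classical
  induction t using Finset.induction_on with
  | empty =>
      constructor
      · simp only [Finset.sup_empty]; infer_instance
      · simp only [Finset.sup_empty, Subgroup.card_bot]
        exact fun hd => hp.one_lt.ne' (Nat.dvd_one.mp hd)
  | @insert a t ha ih =>
      obtain ⟨hKa, hKacard⟩ := h a (Finset.mem_insert_self a t)
      obtain ⟨hLnorm, hLcard⟩ := ih (fun q hq => h q (Finset.mem_insert_of_mem hq))
      rw [Finset.sup_insert]
      set L := t.sup K with hL
      haveI := hKa
      haveI := hLnorm
      refine ⟨inferInstance, ?_⟩
      have h1 : Nat.card ↥(L.subgroupOf (K a ⊔ L)) * (L.subgroupOf (K a ⊔ L)).index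
          = Nat.card ↥(K a ⊔ L) := Subgroup.card_mul_index _
      have h2 : Nat.card ↥(L.subgroupOf (K a ⊔ L)) = Nat.card ↥L :=
        Nat.card_congr (Subgroup.subgroupOfEquivOfLe le_sup_right).toEquiv
      have h3 : (L.subgroupOf (K a ⊔ L)).index = L.relIndex (K a) := by
        rw [← Subgroup.relIndex_sup_right]
        rfl
      have h4 : L.relIndex (K a) ∣ Nat.card ↥(K a) := Subgroup.index_dvd_card _
      intro hdvd
      rw [← h1, h2, h3] at hdvd
      rcases (Nat.Prime.dvd_mul hp).mp hdvd with h5 | h5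
      · exact hLcard h5
      · exact hKacard (h5.trans h4)

/-- If a finite group `G` contains a normal subgroup `A₀` of index at most `J` that is
nilpotent of class at most `c`, then `G` contains a normal subgroup `A` that is nilpotent of
class at most `c`, of order coprime to `p` and of index at most `J * |G_p|`, where `G_p` is
a `p`-Sylow subgroup of `G`. -/
theorem normal_nilpotent_coprime_of_normal_nilpotent
    (p : ℕ) (hp : p.Prime) (J c : ℕ) (hJ : 0 < J)
    (G : Type*) [Group G] [Finite G]
    (A₀ : Subgroup G) (hnorm : A₀.Normal)
    (hnilp : upperCentralSeries ↥A₀ c = ⊤)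
    (hindex : A₀.index ≤ J)
    (Gp : Sylow p G) :
    ∃ A : Subgroup G, A.Normal ∧ upperCentralSeries ↥A c = ⊤ ∧
      Nat.Coprime (Nat.card A) p ∧
      A.index ≤ J * Nat.card Gp := by
  classical
  haveI := hnorm
  haveI := Fact.mk hp
  set N := ↥A₀
  haveI hNnil : Group.IsNilpotent N := ⟨c, hnilp⟩
  -- all Sylow subgroups of N are normal
  have hsylnorm : ∀ (q : ℕ) (_ : Fact q.Prime) (Q : Sylow q N), (↑Q : Subgroup N).Normal :=
    ((isNilpotent_of_finite_tfae (G := N)).out 0 3).mp hNnil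
  -- the family of (chosen) Sylow subgroups
  set K : ℕ → Subgroup N := fun q =>
    if hq : q.Prime then (haveI := Fact.mk hq; ((default : Sylow q N) : Subgroup N)) else ⊥
    with hK
  set s : Finset ℕ := (Nat.card N).primeFactors.erase p with hs
  set H : Subgroup N := s.sup K with hH
  have hNcard : Nat.card N ≠ 0 := Nat.card_pos.ne'
  -- properties of K q for q ∈ s
  have hKprop : ∀ q ∈ s, (K q).Normal ∧ ¬ p ∣ Nat.card ↥(K q) := by
    intro q hq
    have hqp : q ≠ p := Finset.ne_of_mem_erase hq
    have hqprime : q.Prime := Nat.prime_of_mem_primeFactors (Finset.mem_of_mem_erase hq)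
    haveI := Fact.mk hqprime
    have hKq : K q = ((default : Sylow q N) : Subgroup N) := by
      simp only [hK, dif_pos hqprime]
    constructor
    · rw [hKq]; exact hsylnorm q (Fact.mk hqprime) default
    · rw [hKq]
      obtain ⟨n, hn⟩ := IsPGroup.iff_card.mp (default : Sylow q N).2
      rw [hn]
      intro hd
      exact hqp ((Nat.prime_dvd_prime_iff_eq hp hqprime).mp (hp.dvd_of_dvd_pow hd)).symm
  obtain ⟨hHnorm, hHcard⟩ := aux_sup_coprime hp K s hKprop
  -- H is invariant under all automorphisms of N
  have hchar : ∀ φ : MulAut N, ∀ x ∈ H, φ x ∈ H := by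
    intro φ x hx
    have hmap : H.map φ.toMonoidHom ≤ H := by
      rw [(Subgroup.gc_map_comap φ.toMonoidHom).le_iff_le, hH]
      refine Finset.sup_le fun q hq => ?_
      rw [← (Subgroup.gc_map_comap φ.toMonoidHom).le_iff_le]
      have hqprime : q.Prime := Nat.prime_of_mem_primeFactors (Finset.mem_of_mem_erase hq)
      haveI := Fact.mk hqprime
      have hKq : K q = ((default : Sylow q N) : Subgroup N) := by
        simp only [hK, dif_pos hqprime]
      haveI hno : ((default : Sylow q N) : Subgroup N).Normal :=
        hsylnorm q (Fact.mk hqprime) default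
      haveI hno' : ((default : Sylow q N)).Normal := hno
      have hcharq : ((default : Sylow q N) : Subgroup N).Characteristic :=
        Sylow.characteristic_of_normal _ hno'
      have heq : (K q).map φ.toMonoidHom = K q := by
        rw [hKq]
        exact (Subgroup.characteristic_iff_map_eq.mp hcharq φ)
      rw [heq]
      exact Finset.le_sup hq
    exact hmap ⟨x, hx, rfl⟩
  -- the subgroup A
  refine ⟨H.map A₀.subtype, ?_, ?_, ?_, ?_⟩
  · constructor
    intro n hn g
    obtain ⟨x, hx, rfl⟩ := hn
    have h1 : (MulAut.conjNormal g : MulAut N) x ∈ H := hchar _ x hx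
    refine ⟨_, h1, ?_⟩
    simp [MulAut.conjNormal_val]
  · -- nilpotency of class ≤ c
    have hcls : Group.nilpotencyClass N ≤ c :=
      Subgroup.upperCentralSeries_eq_top_iff_nilpotencyClass_le.mp hnilp
    haveI : Group.IsNilpotent ↥H := inferInstance
    have hclsH : Group.nilpotencyClass ↥H ≤ c := (Subgroup.nilpotencyClass_le H).trans hcls
    have hHtop : Subgroup.upperCentralSeries ↥H c = ⊤ :=
      Subgroup.upperCentralSeries_eq_top_iff_nilpotencyClass_le.mpr hclsH
    have e : ↥H ≃* ↥(H.map A₀.subtype) :=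
      Subgroup.equivMapOfInjective H A₀.subtype A₀.subtype_injective
    have hcomap := Subgroup.comap_upperCentralSeries (G := ↥(H.map A₀.subtype)) e c
    rw [hHtop] at hcomap
    rw [eq_top_iff]
    intro a _
    have h1 : e.symm a ∈ Subgroup.comap (e : ↥H →* ↥(H.map A₀.subtype))
        (Subgroup.upperCentralSeries ↥(H.map A₀.subtype) c) := by
      rw [hcomap]; exact Subgroup.mem_top _
    rw [Subgroup.mem_comap] at h1
    simp at h1
    exact h1
  · -- coprimality
    have hcard : Nat.card ↥(H.map A₀.subtype) = Nat.card ↥H :=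
      Nat.card_congr (Subgroup.equivMapOfInjective H A₀.subtype A₀.subtype_injective).toEquiv.symm
    rw [hcard]
    exact Nat.Coprime.symm ((Nat.Prime.coprime_iff_not_dvd hp).mpr hHcard)
  · -- index bound
    rw [Subgroup.index_map_subtype]
    have hiprime : ∀ q : ℕ, q.Prime → q ∣ H.index → q = p := by
      intro q hq hdvd
      by_contra hqp
      have hdvdN : q ∣ Nat.card N := hdvd.trans (Subgroup.index_dvd_card H)
      have hqs : q ∈ s := Finset.mem_erase.mpr ⟨hqp, Nat.mem_primeFactors.mpr ⟨hq, hdvdN, hNcard⟩⟩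
      have hKH : K q ≤ H := Finset.le_sup hqs
      have hHK : H.index ∣ (K q).index := Subgroup.index_dvd_of_le hKH
      haveI := Fact.mk hq
      have hKq : K q = ((default : Sylow q N) : Subgroup N) := by
        simp only [hK, dif_pos hq]
      have hnd : ¬ q ∣ ((default : Sylow q N) : Subgroup N).index :=
        Sylow.not_dvd_index (default : Sylow q N)
      exact hnd (hKq ▸ (hdvd.trans hHK))
    have hHne : H.index ≠ 0 := Subgroup.index_ne_zero_of_finite
    obtain ⟨k, hpow⟩ : ∃ k, H.index = p ^ k :=
      ⟨_, Nat.eq_prime_pow_of_unique_prime_dvd hHne (fun {q} hq hd => hiprime q hq hd)⟩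
    have hdvdG : H.index ∣ Nat.card G :=
      (Subgroup.index_dvd_card H).trans (Subgroup.card_subgroup_dvd_card A₀)
    have hle : H.index ≤ Nat.card Gp := by
      rw [Sylow.card_eq_multiplicity Gp]
      rw [hpow] at hdvdG ⊢
      have hfle : k ≤ (Nat.card G).factorization p :=
        (Nat.Prime.pow_dvd_iff_le_factorization hp Nat.card_pos.ne').mp hdvdG
      exact Nat.pow_le_pow_right hp.pos hfle
    calc H.index * A₀.index ≤ Nat.card Gp * J := Nat.mul_le_mul hle hindex
      _ = J * Nat.card Gp := Nat.mul_comm _ _
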